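/- Let V̄ ⊆ ℝⁿ be a closed convex set invariant under permutations of coordinates. Then the set of real symmetric n×n matrices M with eigenvalue vector λ(M) ∈ V̄ is convex. -/

import Mathlib

open Matrix

lemma permMatrix_mulVec {n : ℕ} (σ : Equiv.Perm (Fin n)) (x : Fin n → ℝ) :
    σ.permMatrix ℝ *ᵥ x = x ∘ σ := by
  funext i
  simp [mulVec, dotProduct, Equiv.Perm.permMatrix, PEquiv.toMatrix_apply,
    Equiv.toPEquiv_apply, eq_comm]

lemma ds_mem {n : ℕ} {Vbar : Set (Fin n → ℝ)} (hconv : Convex ℝ Vbar)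
    (hsymm : ∀ σ : Equiv.Perm (Fin n), ∀ x ∈ Vbar, x ∘ σ ∈ Vbar)
    {S : Matrix (Fin n) (Fin n) ℝ} (hS : S ∈ doublyStochastic ℝ (Fin n))
    {x : Fin n → ℝ} (hx : x ∈ Vbar) : S *ᵥ x ∈ Vbar := by
  obtain ⟨w, hw0, hw1, hw⟩ := exists_eq_sum_perm_of_mem_doublyStochastic hS
  have : S *ᵥ x = ∑ σ : Equiv.Perm (Fin n), w σ • (x ∘ σ) := by
    rw [← hw]
    funext i
    simp only [mulVec, dotProduct, Finset.sum_apply, Matrix.sum_apply, Matrix.smul_apply,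
      Pi.smul_apply, smul_eq_mul, Finset.sum_mul]
    rw [Finset.sum_comm]
    congr 1; funext σ
    rw [← permMatrix_mulVec σ x]
    simp [mulVec, dotProduct, Finset.mul_sum, mul_assoc]
  rw [this]
  exact hconv.sum_mem (fun σ _ => hw0 σ) hw1 (fun σ _ => hsymm σ x hx)

lemma sq_unitary_ds {n : ℕ} {W : Matrix (Fin n) (Fin n) ℝ}
    (hW : W ∈ Matrix.unitaryGroup (Fin n) ℝ) :
    Matrix.of (fun i j => (W j i)^2) ∈ doublyStochastic ℝ (Fin n) := by
  rw [mem_doublyStochastic_iff_sum]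
  refine ⟨fun i j => sq_nonneg _, fun i => ?_, fun j => ?_⟩
  · have h := Matrix.mem_unitaryGroup_iff'.mp hW
    have := congrFun (congrFun h i) i
    simpa [Matrix.mul_apply, Matrix.one_apply, sq, Matrix.star_apply] using this
  · have h := Matrix.mem_unitaryGroup_iff.mp hW
    have := congrFun (congrFun h j) j
    simpa [Matrix.mul_apply, Matrix.one_apply, sq, Matrix.star_apply] using this

lemma diag_conj_eq {n : ℕ} {A : Matrix (Fin n) (Fin n) ℝ} (hA : A.IsHermitian)
    (U : Matrix.unitaryGroup (Fin n) ℝ) :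
    ∃ S ∈ doublyStochastic ℝ (Fin n),
      (fun i => (star (U : Matrix (Fin n) (Fin n) ℝ) * A * (U : Matrix (Fin n) (Fin n) ℝ)) i i)
        = S *ᵥ hA.eigenvalues := by
  set V : Matrix (Fin n) (Fin n) ℝ := (hA.eigenvectorUnitary : Matrix (Fin n) (Fin n) ℝ)
  set W : Matrix (Fin n) (Fin n) ℝ := star V * U with hWdef
  have hWu : W ∈ Matrix.unitaryGroup (Fin n) ℝ := by
    exact Submonoid.mul_mem _ (Unitary.star_mem hA.eigenvectorUnitary.2) U.2
  refine ⟨Matrix.of (fun i j => (W j i)^2), sq_unitary_ds hWu, ?_⟩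
  funext i
  have hspec := hA.spectral_theorem
  have key : star (U : Matrix (Fin n) (Fin n) ℝ) * A * (U : Matrix (Fin n) (Fin n) ℝ)
      = star W * diagonal (RCLike.ofReal ∘ hA.eigenvalues) * W := by
    rw [hWdef, StarMul.star_mul, star_star]
    conv_lhs => rw [hspec]
    simp only [Unitary.conjStarAlgAut_apply, Unitary.coe_star, Matrix.mul_assoc]
    rfl
  rw [key]
  simp only [Matrix.mul_apply, Matrix.diagonal_apply, Matrix.star_apply, mulVec, dotProduct,
    Matrix.of_apply, Finset.sum_mul]
  rw [Finset.sum_comm]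
  congr 1
  funext j
  simp [Finset.sum_ite_eq, star_trivial, sq]
  ring

theorem stmt17 (n : ℕ) (hn : 1 ≤ n) (Vbar : Set (Fin n → ℝ))
    (hc : IsClosed Vbar) (hconv : Convex ℝ Vbar)
    (hsymm : ∀ σ : Equiv.Perm (Fin n), ∀ x ∈ Vbar, x ∘ σ ∈ Vbar) :
    Convex ℝ {M : Matrix (Fin n) (Fin n) ℝ | ∃ h : M.IsHermitian, h.eigenvalues ∈ Vbar} := by
  rintro A ⟨hA, hAv⟩ B ⟨hB, hBv⟩ a b ha hb hab
  have hM : (a • A + b • B).IsHermitian := by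
    show _ = _
    rw [Matrix.conjTranspose_add, Matrix.conjTranspose_smul, Matrix.conjTranspose_smul,
      hA, hB, star_trivial, star_trivial]
  refine ⟨hM, ?_⟩
  set U := hM.eigenvectorUnitary with hU
  obtain ⟨SA, hSA, hSAeq⟩ := diag_conj_eq hA U
  obtain ⟨SB, hSB, hSBeq⟩ := diag_conj_eq hB U
  have hdiag : star (U : Matrix (Fin n) (Fin n) ℝ) * (a • A + b • B) * (U : Matrix (Fin n) (Fin n) ℝ)
      = diagonal (RCLike.ofReal ∘ hM.eigenvalues) := by
    have := hM.conjStarAlgAut_star_eigenvectorUnitary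
    rw [Unitary.conjStarAlgAut_star_apply] at this
    exact this
  have heig : hM.eigenvalues = a • (SA *ᵥ hA.eigenvalues) + b • (SB *ᵥ hB.eigenvalues) := by
    funext i
    have h0 := congrFun (congrFun hdiag i) i
    simp only [Matrix.diagonal_apply_eq, Function.comp_apply, RCLike.ofReal_real_eq_id,
      id_eq] at h0
    have hA0 := congrFun hSAeq i
    have hB0 := congrFun hSBeq i
    have hexp : (star (U : Matrix (Fin n) (Fin n) ℝ) * (a • A + b • B)
        * (U : Matrix (Fin n) (Fin n) ℝ)) i i
        = a * (star (U : Matrix (Fin n) (Fin n) ℝ) * A * (U : Matrix (Fin n) (Fin n) ℝ)) i i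
        + b * (star (U : Matrix (Fin n) (Fin n) ℝ) * B * (U : Matrix (Fin n) (Fin n) ℝ)) i i := by
      simp [Matrix.mul_add, Matrix.add_mul, Matrix.mul_smul, Matrix.smul_mul]
    simp only [Pi.add_apply, Pi.smul_apply, smul_eq_mul]
    rw [← hA0, ← hB0, ← hexp, ← h0]
  rw [heig]
  exact hconv (ds_mem hconv hsymm hSA hAv) (ds_mem hconv hsymm hSB hBv) ha hb hab
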